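/- An assignment χ violates some transitivity constraint if and only if some simple cycle in G(E,χ) contains exactly one 0-edge. -/

import Mathlib

/-- The list of edges of the cycle determined by vertex list `l = [i₁,…,i_k]`:
successive pairs plus the closing edge `(i_k, i₁)`. -/
def cycEdges (l : List ℕ) : List (ℕ × ℕ) := l.zip (l.rotate 1)

/-- `l` is (the vertex list of) a cycle in the graph `G(E)`. -/
def IsCycle (E : ℕ → ℕ → Prop) (l : List ℕ) : Prop :=
  3 ≤ l.length ∧ ∀ p ∈ cycEdges l, E p.1 p.2

/-- The number of 0-edges of the cycle `l` under the labeling `χ`. -/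
def numZeroEdges (χ : ℕ → ℕ → Bool) (l : List ℕ) : ℕ :=
  ((cycEdges l).filter (fun p => !χ p.1 p.2)).length

/-- The assignment `χ` violates some transitivity constraint
`e_{[i₁,i₂]} ∧ ⋯ ∧ e_{[i_{k-1},i_k]} ⇒ e_{[i₁,i_k]}` over `E`. -/
def ViolatesTrans (E : ℕ → ℕ → Prop) (χ : ℕ → ℕ → Bool) : Prop :=
  ∃ l : List ℕ, 3 ≤ l.length ∧ l.Chain' E ∧
    (∀ p ∈ l.zip l.tail, χ p.1 p.2 = true) ∧
    E (l.headD 0) (l.getLastD 0) ∧ χ (l.headD 0) (l.getLastD 0) = false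

/-- The simple cycle (or acyclic path) `l` has a chord: an edge of `G(E)` joining two
vertices at positions `p < q` that are not adjacent in the cycle. -/
def HasChord (E : ℕ → ℕ → Prop) (l : List ℕ) : Prop :=
  ∃ p q : ℕ, p < q ∧ q < l.length ∧ p + 1 < q ∧ ¬(p = 0 ∧ q = l.length - 1) ∧
    E (l.getD p 0) (l.getD q 0)


lemma chain'_iff_zip {R : ℕ → ℕ → Prop} : ∀ l : List ℕ,
    (∀ p ∈ l.zip l.tail, R p.1 p.2) ↔ l.Chain' R
  | [] => by simp [List.Chain']
  | [a] => by simp [List.Chain']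
  | a :: b :: t => by
    rw [List.Chain', List.isChain_cons_cons, ← List.Chain', ← chain'_iff_zip (b :: t)]
    simp [and_comm]

lemma zip_tail_concat (x : ℕ) : ∀ l : List ℕ, l ≠ [] →
    l.zip (l.tail ++ [x]) = l.zip l.tail ++ [(l.getLastD 0, x)]
  | [a], _ => by simp
  | a :: b :: t, _ => by
    have := zip_tail_concat x (b :: t) (by simp)
    simp only [List.tail_cons] at this ⊢
    simp [this]

lemma cycEdges_eq : ∀ l : List ℕ, l ≠ [] →
    cycEdges l = l.zip l.tail ++ [(l.getLastD 0, l.headD 0)]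
  | a :: t, _ => by
    have : (a :: t).rotate 1 = t ++ [a] := by simp [List.rotate_cons_succ]
    rw [cycEdges, this]
    exact zip_tail_concat a (a :: t) (by simp)

lemma cycEdges_rotate (l : List ℕ) (n : ℕ) :
    cycEdges (l.rotate n) = (cycEdges l).rotate n := by
  have h : l.length = (l.rotate 1).length := by simp
  rw [cycEdges, cycEdges, List.zip_eq_zipWith, List.zip_eq_zipWith,
    List.rotate_rotate, Nat.add_comm n 1, ← List.rotate_rotate,
    ← List.zipWith_rotate_distrib _ _ _ _ h]


lemma length_cycEdges (l : List ℕ) : (cycEdges l).length = l.length := by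
  simp [cycEdges]

lemma not_nodup_decomp : ∀ l : List ℕ, ¬ l.Nodup →
    ∃ (a : ℕ) (l₁ l₂ l₃ : List ℕ), l = l₁ ++ a :: l₂ ++ a :: l₃
  | [], h => absurd List.nodup_nil h
  | x :: t, h => by
    rw [List.nodup_cons] at h
    by_cases hx : x ∈ t
    · obtain ⟨l₂, l₃, rfl⟩ := List.append_of_mem hx
      exact ⟨x, [], l₂, l₃, rfl⟩
    · have ht : ¬ t.Nodup := fun hn => h ⟨hx, hn⟩
      obtain ⟨a, l₁, l₂, l₃, rfl⟩ := not_nodup_decomp t ht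
      exact ⟨a, x :: l₁, l₂, l₃, rfl⟩

lemma getLastD_append (l₁ : List ℕ) (a : ℕ) (l₂ : List ℕ) :
    (l₁ ++ a :: l₂).getLastD 0 = (a :: l₂).getLastD 0 := by
  rw [List.getLastD_eq_getLast?, List.getLastD_eq_getLast?, List.getLast?_append_cons]

lemma extract (E : ℕ → ℕ → Prop) (χ : ℕ → ℕ → Bool)
    (hEsym : Symmetric E) (hχsym : ∀ i j, χ i j = χ j i)
    (hEdom : ∀ i j, E i j → i ≠ j) :
    ∀ n (l : List ℕ), l.length ≤ n → l ≠ [] →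
      l.Chain' (fun i j => E i j ∧ χ i j = true) →
      E (l.headD 0) (l.getLastD 0) → χ (l.headD 0) (l.getLastD 0) = false →
      ∃ m, IsCycle E m ∧ m.Nodup ∧ numZeroEdges χ m = 1 := by
  intro n
  induction n with
  | zero => intro l hl hne _ _ _; simp [List.length_eq_zero_iff] at hl; exact absurd hl hne
  | succ n ih =>
    intro l hlen hne hch hE hχ
    by_cases hnd : l.Nodup
    · -- l itself is a simple cycle
      match l, hne with
      | [a], _ =>
        simp only [List.headD_cons, List.getLastD_cons, List.getLastD_nil] at hE
        exact absurd rfl (hEdom a a hE)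
      | [a, b], _ =>
        have h1 : χ a b = true := (List.isChain_cons_cons.mp hch).1.2
        simp only [List.headD_cons, List.getLastD_cons, List.getLastD_nil] at hχ
        rw [h1] at hχ; exact absurd hχ (by simp)
      | a :: b :: c :: t, _ =>
        set L := a :: b :: c :: t with hL
        have hLne : L ≠ [] := by simp [hL]
        have hzip : ∀ p ∈ L.zip L.tail, E p.1 p.2 ∧ χ p.1 p.2 = true :=
          (chain'_iff_zip L).mpr hch
        refine ⟨L, ⟨by simp [hL], ?_⟩, hnd, ?_⟩
        · intro p hp
          rw [cycEdges_eq L hLne] at hp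
          rcases List.mem_append.mp hp with h | h
          · exact (hzip p h).1
          · simp only [List.mem_singleton] at h
            subst h; exact hEsym hE
        · rw [numZeroEdges, cycEdges_eq L hLne, List.filter_append]
          have h0 : (L.zip L.tail).filter (fun p => !χ p.1 p.2) = [] := by
            rw [List.filter_eq_nil_iff]
            intro p hp; simp [(hzip p hp).2]
          rw [h0, List.nil_append, List.filter_cons,
            if_pos (show (!χ (L.getLastD 0) (L.headD 0)) = true by
              rw [Bool.not_eq_true', hχsym]; exact hχ)]
          simp
    · -- shorten using a duplicate
      obtain ⟨a, l₁, l₂, l₃, rfl⟩ := not_nodup_decomp l hnd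
      have hsplit : l₁ ++ a :: l₂ ++ a :: l₃ = l₁ ++ ((a :: l₂) ++ (a :: l₃)) := by simp
      rw [hsplit] at hch
      rw [List.Chain', List.isChain_append] at hch
      obtain ⟨hc1, hc23, hlink⟩ := hch
      rw [List.isChain_append] at hc23
      obtain ⟨hc2, hc3, hlink2⟩ := hc23
      set l' := l₁ ++ a :: l₃ with hl'
      have hch' : l'.Chain' (fun i j => E i j ∧ χ i j = true) := by
        rw [hl', List.Chain', List.isChain_append]
        refine ⟨hc1, hc3, ?_⟩
        intro x hx y hy
        apply hlink x hx
        simp only [List.head?_append, List.head?_cons] at hy ⊢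
        exact hy
      have hhead : l'.headD 0 = (l₁ ++ a :: l₂ ++ a :: l₃).headD 0 := by
        cases l₁ <;> simp [hl']
      have hlast : l'.getLastD 0 = (l₁ ++ a :: l₂ ++ a :: l₃).getLastD 0 := by
        rw [hl', getLastD_append]
        rw [show l₁ ++ a :: l₂ ++ a :: l₃ = (l₁ ++ a :: l₂) ++ a :: l₃ by simp,
          getLastD_append]
      have hlen' : l'.length ≤ n := by
        simp only [hl', List.length_append, List.length_cons] at hlen ⊢
        omega
      exact ih l' hlen' (by simp [hl']) hch'
        (by rw [hhead, hlast]; exact hE) (by rw [hhead, hlast]; exact hχ)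

theorem stmt1 (N : ℕ) (E : ℕ → ℕ → Prop) (χ : ℕ → ℕ → Bool)
    (hEsym : Symmetric E) (hχsym : ∀ i j, χ i j = χ j i)
    (hEdom : ∀ i j, E i j → i < N ∧ j < N ∧ i ≠ j) :
    ViolatesTrans E χ ↔
      ∃ l : List ℕ, IsCycle E l ∧ l.Nodup ∧ numZeroEdges χ l = 1 := by
  constructor
  · rintro ⟨l, hlen, hch, hzip, hE, hχ⟩
    have hne : l ≠ [] := by
      intro h; subst h; simp at hlen
    have hch' : l.Chain' (fun i j => E i j ∧ χ i j = true) := by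
      apply (chain'_iff_zip l).mp
      intro p hp
      exact ⟨(chain'_iff_zip l).mpr hch p hp, hzip p hp⟩
    exact extract E χ hEsym hχsym (fun i j h => (hEdom i j h).2.2) l.length l le_rfl
      hne hch' hE hχ
  · rintro ⟨l, ⟨hlen, hedge⟩, _, hnum⟩
    -- find the position of the unique zero edge
    set c := cycEdges l with hc
    have hck : c.length = l.length := length_cycEdges l
    obtain ⟨e, hfe⟩ := List.length_eq_one_iff.mp hnum
    have he : e ∈ c ∧ (!χ e.1 e.2) = true := by
      have h : e ∈ c.filter (fun p => !χ p.1 p.2) := by rw [hfe]; simp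
      have := List.mem_filter.mp h
      exact ⟨this.1, by simpa using this.2⟩
    obtain ⟨j, hj, hje⟩ := List.getElem_of_mem he.1
    set l' := l.rotate (j + 1) with hl'
    have hl'len : l'.length = l.length := by simp [hl']
    have hl'ne : l' ≠ [] := by
      intro h
      rw [← List.length_eq_zero_iff, hl'len] at h; omega
    have hcyc' : cycEdges l' = c.rotate (j + 1) := by
      rw [hl', cycEdges_rotate, hc]
    -- the closing edge of l' is e
    have hclose : (l'.getLastD 0, l'.headD 0) = e := by
      have h1 : c.rotate (j + 1) = l'.zip l'.tail ++ [(l'.getLastD 0, l'.headD 0)] := by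
        rw [← hcyc']; exact cycEdges_eq l' hl'ne
      have hkpos : 0 < c.length := by omega
      have hlt : (c.rotate (j + 1)).length - 1 < (c.rotate (j + 1)).length := by
        simp only [List.length_rotate]; omega
      have h2 : (c.rotate (j + 1)).getLast? = some (l'.getLastD 0, l'.headD 0) := by
        rw [h1, List.getLast?_append_cons]; rfl
      have h3 : (c.rotate (j + 1)).getLast? =
          some ((c.rotate (j + 1))[(c.rotate (j + 1)).length - 1]'hlt) := by
        rw [List.getLast?_eq_getElem?, List.getElem?_eq_getElem hlt]
      have hidx : ((c.rotate (j + 1)).length - 1 + (j + 1)) % c.length = j := by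
        simp only [List.length_rotate]
        have h5 : c.length - 1 + (j + 1) = c.length + j := by omega
        rw [h5, Nat.add_mod_left, Nat.mod_eq_of_lt hj]
      have h4 : (c.rotate (j + 1))[(c.rotate (j + 1)).length - 1]'hlt = e := by
        rw [List.getElem_rotate]
        simp only [hidx]
        exact hje
      rw [h3, h4] at h2
      exact Option.some.inj h2.symm
    -- all non-closing edges are 1-edges
    have hperm : List.Perm (cycEdges l') c := by rw [hcyc']; exact List.rotate_perm c (j+1)
    have hnum' : ((cycEdges l').filter (fun p => !χ p.1 p.2)).length = 1 := by
      rw [(hperm.filter _).length_eq]; exact hnum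
    rw [cycEdges_eq l' hl'ne, List.filter_append, hclose] at hnum'
    have hefil : [e].filter (fun p => !χ p.1 p.2) = [e] := by simp [he.2]
    rw [hefil, List.length_append] at hnum'
    have hzfil : (l'.zip l'.tail).filter (fun p => !χ p.1 p.2) = [] := by
      have := hnum'
      simp only [List.length_singleton] at this
      rw [← List.length_eq_zero_iff]; omega
    have hones : ∀ p ∈ l'.zip l'.tail, χ p.1 p.2 = true := by
      intro p hp
      by_contra h
      have : p ∈ (l'.zip l'.tail).filter (fun p => !χ p.1 p.2) :=
        List.mem_filter.mpr ⟨hp, by simp [Bool.not_eq_true] at h ⊢; exact h⟩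
      rw [hzfil] at this; exact absurd this (List.not_mem_nil (a := p))
    -- edges of l' are edges of G
    have hedge' : ∀ p ∈ cycEdges l', E p.1 p.2 := by
      intro p hp
      exact hedge p (hperm.mem_iff.mp hp)
    refine ⟨l', by omega, ?_, hones, ?_, ?_⟩
    · apply (chain'_iff_zip l').mp
      intro p hp
      exact hedge' p (by rw [cycEdges_eq l' hl'ne]; exact List.mem_append_left _ hp)
    · have : E (l'.getLastD 0) (l'.headD 0) := by
        apply hedge' (l'.getLastD 0, l'.headD 0)
        rw [cycEdges_eq l' hl'ne]
        exact List.mem_append_right _ (by simp)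
      exact hEsym this
    · have h6 := he.2
      rw [← hclose] at h6
      rw [hχsym, ← Bool.not_eq_true']
      simpa using h6
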